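/- arXiv:1702.08290 — 2 statements merged into one kernel-verified Lean document; each statement's English description precedes it below -/
import Mathlib

section
/- (Deterministic asynchronous incremental subgradient method, diminishing step size) In the deterministic asynchronous incremental subgradient setup, if the positive non-increasing step sizes satisfy Σ_{t=1}^∞ ε_t = ∞ and Σ_{t=1}^∞ ε_t² < ∞, then liminf_{t→∞} D(λ_t) = 𝖣, where λ_t := λ_t^0. -/
open Finset Filter
open scoped RealInnerProductSpace

/-- Componentwise positive part `[x]⁺` on `ℝ^d`. -/
noncomputable def posProj {d : ℕ} (x : EuclideanSpace ℝ (Fin d)) :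
    EuclideanSpace ℝ (Fin d) :=
  WithLp.toLp 2 (fun k => max (x k) 0)

/-- `g` is a subgradient of the convex function `f` at `x`. -/
def IsSubgrad {d : ℕ} (f : EuclideanSpace ℝ (Fin d) → ℝ)
    (x g : EuclideanSpace ℝ (Fin d)) : Prop :=
  ∀ y, f x + ⟪g, y - x⟫ ≤ f y

lemma posProj_eq_self {d : ℕ} {x : EuclideanSpace ℝ (Fin d)} (h : ∀ k, 0 ≤ x k) :
    posProj x = x := by
  ext k; exact max_eq_left (h k)

lemma posProj_nonexpansive {d : ℕ} (x y : EuclideanSpace ℝ (Fin d)) :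
    ‖posProj x - posProj y‖ ≤ ‖x - y‖ := by
  rw [EuclideanSpace.norm_eq, EuclideanSpace.norm_eq]
  apply Real.sqrt_le_sqrt
  apply Finset.sum_le_sum
  intro k _
  have h1 : |posProj x k - posProj y k| ≤ |x k - y k| := abs_max_sub_max_le_abs (x k) (y k) 0
  have h2 := pow_le_pow_left₀ (abs_nonneg _) h1 2
  simpa [PiLp.sub_apply, sq_abs] using h2

lemma exists_subgrad {d : ℕ} {f : EuclideanSpace ℝ (Fin d) → ℝ}
    (hf : ConvexOn ℝ Set.univ f) (y : EuclideanSpace ℝ (Fin d)) :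
    ∃ g, IsSubgrad f y g := by
  classical
  have hcont : Continuous f := by
    rw [← continuousOn_univ]
    exact hf.continuousOn isOpen_univ
  set S : Set (EuclideanSpace ℝ (Fin d) × ℝ) := {p | f p.1 < p.2} with hS
  have hSopen : IsOpen S := isOpen_lt (hcont.comp continuous_fst) continuous_snd
  have hSconv : Convex ℝ S := by
    intro p hp q hq a b ha hb hab
    have hple : f p.1 < p.2 := hp
    have hqle : f q.1 < q.2 := hq
    have hcomb := hf.2 (Set.mem_univ p.1) (Set.mem_univ q.1) ha hb hab
    simp only [smul_eq_mul] at hcomb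
    have hstrict : a * f p.1 + b * f q.1 < a * p.2 + b * q.2 := by
      rcases ha.eq_or_lt with rfl | hapos
      · have hb1 : b = 1 := by linarith
        simpa [hb1] using hqle
      · have h1 : a * f p.1 < a * p.2 := (mul_lt_mul_iff_right₀ hapos).mpr hple
        have h2 : b * f q.1 ≤ b * q.2 := mul_le_mul_of_nonneg_left hqle.le hb
        linarith
    show f ((a • p + b • q).1) < (a • p + b • q).2
    simp only [Prod.fst_add, Prod.snd_add, Prod.smul_fst, Prod.smul_snd, smul_eq_mul]
    exact lt_of_le_of_lt hcomb hstrict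
  have hy : ((y, f y) : EuclideanSpace ℝ (Fin d) × ℝ) ∉ S := by simp [hS]
  obtain ⟨φ, hφ⟩ := geometric_hahn_banach_open_point hSconv hSopen hy
  set c : ℝ := φ (0, 1) with hc_def
  have hdecomp : ∀ (x : EuclideanSpace ℝ (Fin d)) (r : ℝ), φ (x, r) = φ (x, 0) + r * c := by
    intro x r
    have h0 : ((x, r) : EuclideanSpace ℝ (Fin d) × ℝ)
        = (x, 0) + r • ((0 : EuclideanSpace ℝ (Fin d)), (1 : ℝ)) := by
      simp [Prod.ext_iff]
    rw [h0, map_add, map_smul, smul_eq_mul]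
  have hc : c < 0 := by
    have h1 : ((y, f y + 1) : EuclideanSpace ℝ (Fin d) × ℝ) ∈ S := by simp [hS]
    have h2 := hφ _ h1
    rw [hdecomp y (f y + 1), hdecomp y (f y)] at h2
    linarith
  have hkey : ∀ x : EuclideanSpace ℝ (Fin d), φ (x, f x) ≤ φ (y, f y) := by
    intro x
    by_contra h
    push_neg at h
    set r0 : ℝ := (φ (x, f x) - φ (y, f y)) / (-c) with hr0
    have hr0pos : 0 < r0 := div_pos (by linarith) (by linarith)
    have hmem : ((x, f x + r0) : EuclideanSpace ℝ (Fin d) × ℝ) ∈ S := by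
      simp [hS, hr0pos]
    have h2 := hφ _ hmem
    rw [hdecomp x (f x + r0), hdecomp y (f y)] at h2
    rw [hdecomp x (f x), hdecomp y (f y)] at h hr0
    have hcne : (-c) ≠ 0 := by linarith
    have h3 : r0 * (-c) = φ (x, 0) + f x * c - (φ (y, 0) + f y * c) := by
      rw [hr0, div_mul_cancel₀ _ hcne]
    linarith [h2, h3]
  set ψ : EuclideanSpace ℝ (Fin d) →L[ℝ] ℝ := φ.comp (ContinuousLinearMap.inl ℝ _ ℝ) with hψ
  refine ⟨(InnerProductSpace.toDual ℝ (EuclideanSpace ℝ (Fin d))).symm ((-c⁻¹) • ψ), ?_⟩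
  intro x
  have hip : ⟪(InnerProductSpace.toDual ℝ (EuclideanSpace ℝ (Fin d))).symm ((-c⁻¹) • ψ), x - y⟫
      = -c⁻¹ * (φ (x - y, 0)) := by
    rw [InnerProductSpace.toDual_symm_apply]
    simp [hψ]
  have hlin : φ ((x : EuclideanSpace ℝ (Fin d)) - y, (0 : ℝ)) = φ (x, 0) - φ (y, 0) := by
    have h0 : ((x - y, (0:ℝ)) : EuclideanSpace ℝ (Fin d) × ℝ) = (x, 0) - (y, 0) := by
      simp [Prod.ext_iff]
    rw [h0, map_sub]
  have hk := hkey x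
  rw [hdecomp x (f x), hdecomp y (f y)] at hk
  rw [hip, hlin]
  have hcinv : 0 < -c⁻¹ := by
    have : c⁻¹ < 0 := inv_lt_zero.mpr hc
    linarith
  have hmul : (-c⁻¹) * (φ (x, 0) - φ (y, 0)) ≤ (-c⁻¹) * ((f y - f x) * c) := by
    apply mul_le_mul_of_nonneg_left _ hcinv.le
    nlinarith [hk]
  have hsimp : (-c⁻¹) * ((f y - f x) * c) = -(f y - f x) := by
    rw [show (-c⁻¹) * ((f y - f x) * c) = -((f y - f x) * (c * c⁻¹)) by ring,
      mul_inv_cancel₀ (ne_of_lt hc), mul_one]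
  linarith [hmul, hsimp.symm.le]

/-- Arithmetic helper combining the various error bounds in one inequality. -/
lemma stmt15_arith {Sq U2 I Dd A B V Mc et es E nG : ℝ}
    (hV : 0 ≤ V) (hMc : 0 ≤ Mc) (het : 0 < et)
    (hetE : et ≤ E) (hesE : es ≤ E)
    (hA : A ≤ Mc * (es * V)) (hB : B ≤ Mc * (es * V))
    (hA0 : 0 ≤ A) (hB0 : 0 ≤ B)
    (hG : nG ≤ V) (hG0 : 0 ≤ nG)
    (hI : Dd - V * B - V * A ≤ I)
    (hSq : Sq ≤ U2 - 2 * (et * I) + et ^ 2 * nG ^ 2) :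
    Sq ≤ U2 - 2 * et * Dd + (4 * Mc + 1) * V ^ 2 * E ^ 2 := by
  have hE : 0 < E := lt_of_lt_of_le het hetE
  have q1 : et * A ≤ E * (Mc * (es * V)) :=
    mul_le_mul hetE hA hA0 hE.le
  have q2 : et * B ≤ E * (Mc * (es * V)) :=
    mul_le_mul hetE hB hB0 hE.le
  have q1' : E * (Mc * (es * V)) ≤ E * (Mc * (E * V)) := by
    have h0 : es * V ≤ E * V := mul_le_mul_of_nonneg_right hesE hV
    exact mul_le_mul_of_nonneg_left (mul_le_mul_of_nonneg_left h0 hMc) hE.le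
  have r1 : V * (et * A) ≤ V * (E * (Mc * (E * V))) :=
    mul_le_mul_of_nonneg_left (q1.trans q1') hV
  have r2 : V * (et * B) ≤ V * (E * (Mc * (E * V))) :=
    mul_le_mul_of_nonneg_left (q2.trans q1') hV
  have q3 : et ^ 2 * nG ^ 2 ≤ E ^ 2 * V ^ 2 :=
    mul_le_mul (pow_le_pow_left₀ het.le hetE 2) (pow_le_pow_left₀ hG0 hG 2)
      (by positivity) (by positivity)
  have r0 : et * (Dd - V * B - V * A) ≤ et * I := mul_le_mul_of_nonneg_left hI het.le
  nlinarith [r0, r1, r2, q3, hSq]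


lemma stmt15_wsum (f ε c : ℕ → ℝ) (a : ℕ → ℝ) (Dopt : ℝ) (t0 : ℕ) (ht0 : 2 ≤ t0)
    (hεpos : ∀ t, 0 < ε t)
    (ha : ∀ t, 0 ≤ a t) (hc : Summable c) (hc0 : ∀ t, 0 ≤ c t)
    (hflow : ∀ t, 2 ≤ t → Dopt ≤ f t)
    (hkey : ∀ t, t0 ≤ t → a (t + 1) + 2 * ε t * (f t - Dopt) ≤ a t + c t) :
    Summable (fun t => ε t * (f t - Dopt)) := by
  have hCb : ∀ N : ℕ, ∑ n ∈ range N, c (t0 + n) ≤ ∑' n, c (t0 + n) :=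
    fun N => Summable.sum_le_tsum (range N) (fun i _ => hc0 _)
      ((summable_nat_add_iff (f := c) t0).mpr hc |>.congr (fun n => by rw [add_comm]))
  have hpartial : ∀ N : ℕ, a (t0 + N)
      + 2 * ∑ n ∈ range N, ε (t0 + n) * (f (t0 + n) - Dopt)
      ≤ a t0 + ∑ n ∈ range N, c (t0 + n) := by
    intro N
    induction N with
    | zero => simp
    | succ N ih =>
      have hk := hkey (t0 + N) (by omega)
      rw [Finset.sum_range_succ, Finset.sum_range_succ]
      have hrw : t0 + (N + 1) = (t0 + N) + 1 := by omega
      rw [hrw]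
      linarith
  have hws0 : Summable (fun n : ℕ => ε (t0 + n) * (f (t0 + n) - Dopt)) := by
    apply summable_of_sum_range_le (c := (a t0 + ∑' n, c (t0 + n)) / 2)
    · intro n
      exact mul_nonneg (hεpos _).le (by linarith [hflow (t0 + n) (by omega)])
    · intro N
      have hp := hpartial N
      have hb := hCb N
      have hnn := ha (t0 + N)
      linarith
  have h' : Summable (fun n : ℕ => ε (n + t0) * (f (n + t0) - Dopt)) :=
    hws0.congr (fun n => by rw [add_comm])
  exact (summable_nat_add_iff (f := fun t => ε t * (f t - Dopt)) t0).mp h'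

lemma stmt15_liminf (f ε : ℕ → ℝ) (Dopt : ℝ)
    (hεpos : ∀ t, 0 < ε t) (hεdiv : ¬ Summable ε)
    (hflow : ∀ t, 2 ≤ t → Dopt ≤ f t)
    (hwsum : Summable (fun t => ε t * (f t - Dopt))) :
    liminf f atTop = Dopt := by
  have hfreq : ∀ δ : ℝ, 0 < δ → ∀ t1 : ℕ, ∃ t, t1 ≤ t ∧ f t ≤ Dopt + δ := by
    intro δ hδ t1
    by_contra hcon
    push_neg at hcon
    have hw2 : Summable (fun n : ℕ => ε (n + (t1 + 2)) * (f (n + (t1 + 2)) - Dopt)) :=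
      (summable_nat_add_iff (f := fun t => ε t * (f t - Dopt)) (t1 + 2)).mpr hwsum
    have hsum2 : Summable (fun n : ℕ => ε (n + (t1 + 2))) := by
      apply Summable.of_nonneg_of_le (fun n => (hεpos _).le) _ (hw2.div_const δ)
      intro n
      rw [le_div_iff₀ hδ]
      have hlt := hcon (n + (t1 + 2)) (by omega)
      have h' : δ ≤ f (n + (t1 + 2)) - Dopt := by linarith
      exact mul_le_mul_of_nonneg_left h' (hεpos _).le
    exact hεdiv ((summable_nat_add_iff (f := ε) (t1 + 2)).mp hsum2)
  have hlow : ∀ᶠ t in atTop, Dopt ≤ f t :=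
    eventually_atTop.mpr ⟨2, fun t ht => hflow t ht⟩
  have hbdd : IsBoundedUnder (· ≥ ·) atTop f := isBoundedUnder_of_eventually_ge hlow
  have hcob : IsCoboundedUnder (· ≥ ·) atTop f := by
    refine ⟨Dopt + 1, fun x hx => ?_⟩
    rw [eventually_map] at hx
    obtain ⟨t1, ht1⟩ := eventually_atTop.mp hx
    obtain ⟨t, htt, hle⟩ := hfreq 1 one_pos t1
    exact le_trans (ht1 t htt) hle
  refine le_antisymm ?_ (le_liminf_of_le hcob hlow)
  by_contra hgt
  push_neg at hgt
  have hδ : 0 < (liminf f atTop - Dopt) / 2 := by linarith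
  have hfr : ∃ᶠ t in atTop, f t ≤ Dopt + (liminf f atTop - Dopt) / 2 := by
    rw [frequently_atTop]
    intro t1
    obtain ⟨t, h1, h2⟩ := hfreq _ hδ t1
    exact ⟨t, h1, h2⟩
  have hfin := liminf_le_of_frequently_le hfr hbdd
  linarith

set_option maxHeartbeats 1000000 in
/-- Deterministic asynchronous incremental subgradient method
with diminishing step sizes (`Σ ε_t = ∞`, `Σ ε_t² < ∞`):
`liminf_{t→∞} D(λ_t) = 𝖣`, where `λ_t := λ_t^0`. -/
theorem stmt15 (d K : ℕ) (hd : 1 ≤ d) (hK : 1 ≤ K)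
    (D : ℕ → EuclideanSpace ℝ (Fin d) → ℝ)
    (hDconv : ∀ i ∈ Icc 1 K, ConvexOn ℝ Set.univ (D i))
    (V : ℝ)
    (hsubbd : ∀ i ∈ Icc 1 K, ∀ x g : EuclideanSpace ℝ (Fin d),
      IsSubgrad (D i) x g → ‖g‖ ≤ V)
    (lamstar : EuclideanSpace ℝ (Fin d)) (hstar : ∀ k, 0 ≤ lamstar k)
    (Dopt : ℝ) (hDopt : Dopt = ∑ i ∈ Icc 1 K, D i lamstar)
    (hmin : ∀ μ : EuclideanSpace ℝ (Fin d), (∀ k, 0 ≤ μ k) →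
      Dopt ≤ ∑ i ∈ Icc 1 K, D i μ)
    (ε : ℕ → ℝ) (hεpos : ∀ t, 0 < ε t) (hεmono : ∀ s t, s ≤ t → ε t ≤ ε s)
    (hεdiv : ¬ Summable ε) (hεsq : Summable (fun t => ε t ^ 2))
    (τmax : ℕ) (τdel : ℕ → ℕ → ℕ) (hτ : ∀ t i, τdel t i ≤ τmax)
    (g : ℕ → ℕ → EuclideanSpace ℝ (Fin d))
    (lam : ℕ → ℕ → EuclideanSpace ℝ (Fin d))
    (B₀ : ℝ) (hB₀ : ‖lam 1 0 - lamstar‖ ≤ B₀)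
    (hshift : ∀ t, 2 ≤ t → lam t 0 = lam (t - 1) K)
    (hgsub : ∀ t, 1 ≤ t → ∀ i, 1 ≤ i → i ≤ K →
      IsSubgrad (D i) (lam (max 1 (t - τdel t i)) (i - 1)) (g t i))
    (hupdate : ∀ t, 1 ≤ t → ∀ i, 1 ≤ i → i ≤ K →
      lam t i = posProj (lam t (i - 1) - ε t • g t i)) :
    liminf (fun t => ∑ i ∈ Icc 1 K, D i (lam t 0)) atTop = Dopt := by
  -- basic bounds
  have hgbd : ∀ t, 1 ≤ t → ∀ i, 1 ≤ i → i ≤ K → ‖g t i‖ ≤ V := fun t ht i h1 h2 =>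
    hsubbd i (mem_Icc.mpr ⟨h1, h2⟩) _ _ (hgsub t ht i h1 h2)
  have hV : 0 ≤ V := le_trans (norm_nonneg _) (hgbd 1 le_rfl 1 le_rfl hK)
  have hLip : ∀ i ∈ Icc 1 K, ∀ x y : EuclideanSpace ℝ (Fin d),
      D i x - D i y ≤ V * ‖x - y‖ := by
    intro i hi x y
    obtain ⟨gx, hgx⟩ := exists_subgrad (hDconv i hi) x
    have hb : ‖gx‖ ≤ V := hsubbd i hi x gx hgx
    have h1 := hgx y
    have h2 : |⟪gx, y - x⟫| ≤ ‖gx‖ * ‖y - x‖ := abs_real_inner_le_norm _ _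
    have h3 : ‖gx‖ * ‖y - x‖ ≤ V * ‖y - x‖ :=
      mul_le_mul_of_nonneg_right hb (norm_nonneg _)
    have h4 := neg_abs_le ⟪gx, y - x⟫
    have h5 : ‖y - x‖ = ‖x - y‖ := norm_sub_rev _ _
    have h3' : ‖gx‖ * ‖y - x‖ ≤ V * ‖x - y‖ := by rw [← h5]; exact h3
    linarith [neg_le_abs ⟪gx, y - x⟫]
  -- nonnegativity of iterates
  have hnon : ∀ t, 1 ≤ t → ∀ i, 1 ≤ i → i ≤ K → ∀ k, 0 ≤ lam t i k := by
    intro t ht i h1 h2 k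
    rw [hupdate t ht i h1 h2]
    exact le_max_right ((lam t (i - 1) - ε t • g t i) k) 0
  have hnon0 : ∀ t, 2 ≤ t → ∀ k, 0 ≤ lam t 0 k := by
    intro t ht k
    rw [hshift t ht]
    exact hnon (t - 1) (by omega) K hK le_rfl k
  have hnonall : ∀ t, 2 ≤ t → ∀ i, i ≤ K → ∀ k, 0 ≤ lam t i k := by
    intro t ht i hi k
    rcases Nat.eq_zero_or_pos i with h0 | h1
    · subst h0; exact hnon0 t ht k
    · exact hnon t (by omega) i h1 hi k
  -- one inner update moves by at most ε t * V
  have hstep : ∀ t, 2 ≤ t → ∀ i, 1 ≤ i → i ≤ K →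
      ‖lam t i - lam t (i - 1)‖ ≤ ε t * V := by
    intro t ht i h1 h2
    have hnn : ∀ k, 0 ≤ lam t (i - 1) k := hnonall t ht (i - 1) (by omega)
    rw [hupdate t (by omega) i h1 h2]
    calc ‖posProj (lam t (i - 1) - ε t • g t i) - lam t (i - 1)‖
        = ‖posProj (lam t (i - 1) - ε t • g t i) - posProj (lam t (i - 1))‖ := by
          rw [posProj_eq_self hnn]
      _ ≤ ‖(lam t (i - 1) - ε t • g t i) - lam t (i - 1)‖ := posProj_nonexpansive _ _
      _ = ε t * ‖g t i‖ := by
          rw [show (lam t (i - 1) - ε t • g t i) - lam t (i - 1) = -(ε t • g t i) by abel]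
          rw [norm_neg, norm_smul, Real.norm_eq_abs, abs_of_pos (hεpos t)]
      _ ≤ ε t * V := mul_le_mul_of_nonneg_left (hgbd t (by omega) i h1 h2) (hεpos t).le
  -- within a round
  have hintra : ∀ t, 2 ≤ t → ∀ i, i ≤ K → ‖lam t i - lam t 0‖ ≤ (i : ℝ) * (ε t * V) := by
    intro t ht i
    induction i with
    | zero => simp
    | succ n ih =>
      intro hn
      have h1 := ih (by omega)
      have h2 := hstep t ht (n + 1) (by omega) hn
      have h3 : ‖lam t (n + 1) - lam t 0‖ ≤
          ‖lam t (n + 1) - lam t n‖ + ‖lam t n - lam t 0‖ := by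
        have := norm_add_le (lam t (n + 1) - lam t n) (lam t n - lam t 0)
        simpa using this
      have h4 : (n + 1 : ℕ) - 1 = n := by omega
      rw [h4] at h2
      push_cast
      linarith
  -- across rounds
  have hcross : ∀ s, 2 ≤ s → ∀ n : ℕ,
      ‖lam (s + n) 0 - lam s 0‖ ≤ (n : ℝ) * (K : ℝ) * (ε s * V) := by
    intro s hs n
    induction n with
    | zero => simp
    | succ n ih =>
      have h1 : lam (s + (n + 1)) 0 = lam (s + n) K := by
        have := hshift (s + (n + 1)) (by omega)
        simpa [show s + (n + 1) - 1 = s + n by omega] using this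
      have h2 := hintra (s + n) (by omega) K le_rfl
      have h3 : ‖lam (s + (n + 1)) 0 - lam s 0‖ ≤
          ‖lam (s + n) K - lam (s + n) 0‖ + ‖lam (s + n) 0 - lam s 0‖ := by
        rw [h1]
        have := norm_add_le (lam (s + n) K - lam (s + n) 0) (lam (s + n) 0 - lam s 0)
        simpa using this
      have h4 : ε (s + n) ≤ ε s := hεmono s (s + n) (by omega)
      have h5 : (K : ℝ) * (ε (s + n) * V) ≤ (K : ℝ) * (ε s * V) := by
        apply mul_le_mul_of_nonneg_left _ (by positivity)
        exact mul_le_mul_of_nonneg_right h4 hV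
      push_cast
      push_cast at ih
      nlinarith [mul_nonneg (hεpos s).le hV, ih, h2, h3, h5]
  -- the master distance bound
  have hdist : ∀ s t i j, 2 ≤ s → s ≤ t → t - s ≤ τmax → i ≤ K → j ≤ K →
      ‖lam t j - lam s i‖ ≤ ((τmax : ℝ) + 2) * (K : ℝ) * (ε s * V) := by
    intro s t i j hs hst hτs hi hj
    obtain ⟨n, rfl⟩ : ∃ n, t = s + n := ⟨t - s, by omega⟩
    have hn : n ≤ τmax := by omega
    have h1 := hintra (s + n) (by omega) j hj
    have h2 := hcross s hs n
    have h3 := hintra s hs i hi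
    have htri : ‖lam (s + n) j - lam s i‖ ≤
        ‖lam (s + n) j - lam (s + n) 0‖ + ‖lam (s + n) 0 - lam s 0‖ +
          ‖lam s 0 - lam s i‖ := by
      have := norm_add₃_le (a := lam (s + n) j - lam (s + n) 0)
        (b := lam (s + n) 0 - lam s 0) (c := lam s 0 - lam s i)
      simpa using this
    rw [norm_sub_rev (lam s 0)] at htri
    have hε0 : 0 ≤ ε s * V := mul_nonneg (hεpos s).le hV
    have hεt : ε (s + n) ≤ ε s := hεmono s (s + n) (by omega)
    have hεtV : ε (s + n) * V ≤ ε s * V := mul_le_mul_of_nonneg_right hεt hV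
    have q1 : (j : ℝ) * (ε (s + n) * V) ≤ (K : ℝ) * (ε s * V) := by
      exact mul_le_mul (by exact_mod_cast hj) hεtV (mul_nonneg (hεpos _).le hV) (by positivity)
    have q2 : (i : ℝ) * (ε s * V) ≤ (K : ℝ) * (ε s * V) :=
      mul_le_mul_of_nonneg_right (by exact_mod_cast hi) hε0
    have q3 : (n : ℝ) * (K : ℝ) * (ε s * V) ≤ (τmax : ℝ) * (K : ℝ) * (ε s * V) := by
      apply mul_le_mul_of_nonneg_right _ hε0
      exact mul_le_mul_of_nonneg_right (by exact_mod_cast hn) (by positivity)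
    nlinarith [h1, h2, h3, htri, q1, q2, q3]
  -- the per-update inequality
  have hper : ∀ t, τmax + 2 ≤ t → ∀ i, 1 ≤ i → i ≤ K →
      ‖lam t i - lamstar‖ ^ 2 ≤ ‖lam t (i - 1) - lamstar‖ ^ 2
        - 2 * ε t * (D i (lam t 0) - D i lamstar)
        + (4 * (((τmax : ℝ) + 2) * (K : ℝ)) + 1) * V ^ 2 * ε (t - τmax) ^ 2 := by
    intro t ht i h1 hiK
    set s := t - τdel t i with hs_def
    have hs2 : 2 ≤ s := by have := hτ t i; omega
    have hst : s ≤ t := by omega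
    have hτs : t - s ≤ τmax := by have := hτ t i; omega
    have hmax : max 1 (t - τdel t i) = s := max_eq_right (by omega)
    have hg : IsSubgrad (D i) (lam s (i - 1)) (g t i) := by
      have := hgsub t (by omega) i h1 hiK
      rwa [hmax] at this
    have hA := hdist s t (i - 1) (i - 1) hs2 hst hτs (by omega) (by omega)
    have hB := hdist s t (i - 1) 0 hs2 hst hτs (by omega) (Nat.zero_le K)
    have hεsE : ε s ≤ ε (t - τmax) := hεmono (t - τmax) s (by omega)
    have hεtE : ε t ≤ ε (t - τmax) := hεmono (t - τmax) t (by omega)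
    have hgV : ‖g t i‖ ≤ V := hgbd t (by omega) i h1 hiK
    -- the squared-distance expansion
    have step1 : ‖lam t i - lamstar‖ ≤ ‖(lam t (i - 1) - ε t • g t i) - lamstar‖ := by
      rw [hupdate t (by omega) i h1 hiK]
      calc ‖posProj (lam t (i - 1) - ε t • g t i) - lamstar‖
          = ‖posProj (lam t (i - 1) - ε t • g t i) - posProj lamstar‖ := by
            rw [posProj_eq_self hstar]
        _ ≤ _ := posProj_nonexpansive _ _
    have step1' : ‖lam t i - lamstar‖ ^ 2 ≤
        ‖(lam t (i - 1) - ε t • g t i) - lamstar‖ ^ 2 :=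
      pow_le_pow_left₀ (norm_nonneg _) step1 2
    have expand : ‖(lam t (i - 1) - ε t • g t i) - lamstar‖ ^ 2 =
        ‖lam t (i - 1) - lamstar‖ ^ 2
          - 2 * (ε t * ⟪g t i, lam t (i - 1) - lamstar⟫) + ε t ^ 2 * ‖g t i‖ ^ 2 := by
      have hre : (lam t (i - 1) - ε t • g t i) - lamstar =
          (lam t (i - 1) - lamstar) - ε t • g t i := by abel
      rw [hre, norm_sub_sq_real, real_inner_smul_right, norm_smul, Real.norm_eq_abs,
        mul_pow, sq_abs, real_inner_comm]
    -- inner product lower bound via the (delayed) subgradient inequality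
    have hgl := hg lamstar
    have hg0 : D i (lam t 0) - D i (lam s (i - 1)) ≤ V * ‖lam t 0 - lam s (i - 1)‖ :=
      hLip i (mem_Icc.mpr ⟨h1, hiK⟩) _ _
    have id1 : ⟪g t i, lam t (i - 1) - lamstar⟫ =
        ⟪g t i, lam s (i - 1) - lamstar⟫ + ⟪g t i, lam t (i - 1) - lam s (i - 1)⟫ := by
      rw [← inner_add_right]
      congr 1
      abel
    have id2 : ⟪g t i, lam s (i - 1) - lamstar⟫ =
        -⟪g t i, lamstar - lam s (i - 1)⟫ := by
      rw [← inner_neg_right]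
      congr 1
      abel
    have r2 : -(V * ‖lam t (i - 1) - lam s (i - 1)‖) ≤
        ⟪g t i, lam t (i - 1) - lam s (i - 1)⟫ := by
      have a1 := abs_real_inner_le_norm (g t i) (lam t (i - 1) - lam s (i - 1))
      have a2 := mul_le_mul_of_nonneg_right hgV
        (norm_nonneg (lam t (i - 1) - lam s (i - 1)))
      have a3 := neg_abs_le ⟪g t i, lam t (i - 1) - lam s (i - 1)⟫
      linarith
    have hinner : D i (lam t 0) - D i lamstar - V * ‖lam t 0 - lam s (i - 1)‖
        - V * ‖lam t (i - 1) - lam s (i - 1)‖ ≤ ⟪g t i, lam t (i - 1) - lamstar⟫ := by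
      rw [id1, id2]
      linarith
    -- now combine everything
    exact stmt15_arith hV (by positivity) (hεpos t) hεtE hεsE hA hB (norm_nonneg _)
      (norm_nonneg _) hgV (norm_nonneg _) hinner (by linarith [step1', expand])
  -- summed per-round inequality
  have hkey : ∀ t, τmax + 2 ≤ t →
      ‖lam (t + 1) 0 - lamstar‖ ^ 2
        + 2 * ε t * ((∑ i ∈ Icc 1 K, D i (lam t 0)) - Dopt)
      ≤ ‖lam t 0 - lamstar‖ ^ 2
        + (K : ℝ) * ((4 * (((τmax : ℝ) + 2) * (K : ℝ)) + 1) * V ^ 2)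
          * ε (t - τmax) ^ 2 := by
    intro t ht
    have hsum : ∀ j, j ≤ K → ‖lam t j - lamstar‖ ^ 2 ≤ ‖lam t 0 - lamstar‖ ^ 2
        - 2 * ε t * (∑ i ∈ Icc 1 j, (D i (lam t 0) - D i lamstar))
        + (j : ℝ) * ((4 * (((τmax : ℝ) + 2) * (K : ℝ)) + 1) * V ^ 2
            * ε (t - τmax) ^ 2) := by
      intro j
      induction j with
      | zero => intro _; simp
      | succ n ih =>
        intro hn
        have h1 := ih (by omega)
        have h2 := hper t ht (n + 1) (by omega) hn
        rw [Finset.sum_Icc_succ_top (by omega : 1 ≤ n + 1)]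
        have h3 : (n + 1 : ℕ) - 1 = n := by omega
        rw [h3] at h2
        push_cast
        push_cast at h1
        linarith
    have hKfin := hsum K le_rfl
    have hlam : lam (t + 1) 0 = lam t K := by
      have := hshift (t + 1) (by omega)
      simpa using this
    have hsplit : ∑ i ∈ Icc 1 K, (D i (lam t 0) - D i lamstar)
        = (∑ i ∈ Icc 1 K, D i (lam t 0)) - Dopt := by
      rw [Finset.sum_sub_distrib, hDopt]
    rw [hlam]
    rw [hsplit] at hKfin
    nlinarith [hKfin]
  have hflow : ∀ t, 2 ≤ t → Dopt ≤ ∑ i ∈ Icc 1 K, D i (lam t 0) :=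
    fun t ht => hmin _ (hnon0 t ht)
  have hcsum : Summable (fun t =>
      (K : ℝ) * ((4 * (((τmax : ℝ) + 2) * (K : ℝ)) + 1) * V ^ 2)
        * ε (t - τmax) ^ 2) := by
    apply (summable_nat_add_iff (f := fun t =>
      (K : ℝ) * ((4 * (((τmax : ℝ) + 2) * (K : ℝ)) + 1) * V ^ 2)
        * ε (t - τmax) ^ 2) τmax).mp
    apply (hεsq.mul_left
      ((K : ℝ) * ((4 * (((τmax : ℝ) + 2) * (K : ℝ)) + 1) * V ^ 2))).congr
    intro n
    simp [Nat.add_sub_cancel]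
  have hwsum := stmt15_wsum (fun t => ∑ i ∈ Icc 1 K, D i (lam t 0)) ε
    (fun t => (K : ℝ) * ((4 * (((τmax : ℝ) + 2) * (K : ℝ)) + 1) * V ^ 2)
      * ε (t - τmax) ^ 2)
    (fun t => ‖lam t 0 - lamstar‖ ^ 2) Dopt (τmax + 2) (by omega) hεpos
    (fun t => sq_nonneg _) hcsum (fun t => by positivity) hflow hkey
  exact stmt15_liminf _ ε Dopt hεpos hεdiv hflow hwsum
end

section
/- Let ε, η, C, B₀ > 0 and 𝖣 ∈ ℝ. Let (a_t)_{t≥1} be a sequence of nonnegative reals with a_1 ≤ B₀², and (d_t)_{t≥1} a sequence of reals. Suppose that for every t ≥ 1 such that d_s ≥ 𝖣 + (εC + η)/2 for all 1 ≤ s ≤ t, one has a_{t+1} ≤ a_t − 2ε(d_t − 𝖣) + ε²C. Then there exists t with t ≤ B₀²/(εη) + 1 and d_t < 𝖣 + (εC + η)/2. -/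
/-- Descent/hitting-time argument: if `a₁ ≤ B₀²`, the `a_t` are
nonnegative, and `a_{t+1} ≤ a_t − 2ε(d_t − Dopt) + ε²C` holds whenever
`d_s ≥ Dopt + (εC + η)/2` for all `1 ≤ s ≤ t`, then some `t ≤ B₀²/(εη) + 1`
satisfies `d_t < Dopt + (εC + η)/2`. -/
theorem stmt16 (ε η C B₀ : ℝ) (hε : 0 < ε) (hη : 0 < η) (hC : 0 < C) (hB₀ : 0 < B₀)
    (Dopt : ℝ) (a : ℕ → ℝ) (ha0 : ∀ t, 1 ≤ t → 0 ≤ a t) (ha1 : a 1 ≤ B₀ ^ 2)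
    (dseq : ℕ → ℝ)
    (hdesc : ∀ t, 1 ≤ t →
      (∀ s, 1 ≤ s → s ≤ t → Dopt + (ε * C + η) / 2 ≤ dseq s) →
      a (t + 1) ≤ a t - 2 * ε * (dseq t - Dopt) + ε ^ 2 * C) :
    ∃ t : ℕ, 1 ≤ t ∧ (t : ℝ) ≤ B₀ ^ 2 / (ε * η) + 1 ∧
      dseq t < Dopt + (ε * C + η) / 2 := by
  by_contra hcon
  push_neg at hcon
  set x : ℝ := B₀ ^ 2 / (ε * η) with hx
  have hx0 : 0 ≤ x := by positivity
  set T : ℕ := ⌊x⌋₊ + 1 with hT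
  have hTle : (T : ℝ) ≤ x + 1 := by
    rw [hT]; push_cast
    have := Nat.floor_le hx0
    linarith
  -- all d_t up to T are above threshold
  have hbig : ∀ t, 1 ≤ t → t ≤ T → Dopt + (ε * C + η) / 2 ≤ dseq t := by
    intro t ht1 htT
    by_contra hlt
    push_neg at hlt
    have : (t : ℝ) ≤ x + 1 := le_trans (by exact_mod_cast htT) hTle
    exact absurd hlt (not_lt.mpr (hcon t ht1 this))
  -- descent: a (k+1+1) ≤ a 1 - (k+1) * (ε*η) for k+1 ≤ T
  have key : ∀ k : ℕ, k ≤ T → a (k + 1) ≤ a 1 - k * (ε * η) := by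
    intro k
    induction k with
    | zero => intro _; simp
    | succ n ih =>
      intro hnT
      have hn : n ≤ T := Nat.le_of_succ_le hnT
      have h1 : a (n + 1 + 1) ≤ a (n + 1) - 2 * ε * (dseq (n + 1) - Dopt) + ε ^ 2 * C := by
        apply hdesc (n + 1) (Nat.le_add_left 1 n)
        intro s hs1 hs2
        exact hbig s hs1 (le_trans hs2 hnT)
      have h2 : Dopt + (ε * C + η) / 2 ≤ dseq (n + 1) := hbig (n + 1) (Nat.le_add_left 1 n) hnT
      have h3 : a (n + 1 + 1) ≤ a (n + 1) - ε * η := by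
        nlinarith [hε.le, hη.le]
      have := ih hn
      push_cast
      linarith
  have h0 : 0 ≤ a (T + 1) := ha0 (T + 1) (Nat.le_add_left 1 T)
  have hkey := key T le_rfl
  have hTgt : x < (T : ℝ) := by
    rw [hT]; push_cast
    exact Nat.lt_floor_add_one x
  have hεη : 0 < ε * η := mul_pos hε hη
  have : (T : ℝ) * (ε * η) ≤ B₀ ^ 2 := by linarith
  have : (T : ℝ) ≤ x := by
    rw [hx, le_div_iff₀ hεη]
    linarith
  linarith
end
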